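/- Let S be a symmetric d×d real matrix with spectral radius ρ(S) = max(|λ_max(S)|, |λ_min(S)|), and let c > 1, m ∈ {2,3,4}. Then the optimal signed splitting gain satisfies G_m^{−c} ≤ −κ_m · ρ(S), where κ₂ = (c−1)/(c+1) and κ_m = (c−1)/2 for m ≥ 3. Consequently G_m^{−c} < 0 unless S = 0. -/

import Mathlib

open Matrix BigOperators

lemma key_aux {d m : ℕ} {c : ℝ} {S : Matrix (Fin d) (Fin d) ℝ} {G : ℝ}
    (hG : IsLeast {t : ℝ | ∃ (w : Fin m → ℝ) (δ : Fin m → Fin d → ℝ),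
      ∑ i, w i = 1 ∧ ∑ i, |w i| ≤ c ∧ ∑ i, w i • δ i = 0 ∧
      (∀ i, δ i ⬝ᵥ δ i ≤ 1) ∧
      t = ∑ i, w i * (δ i ⬝ᵥ S.mulVec (δ i))} G)
    (u : Fin d → ℝ) (hu : u ⬝ᵥ u = 1) (lam : ℝ) (hev : S.mulVec u = lam • u)
    (w a : Fin m → ℝ) (hw1 : ∑ i, w i = 1) (hwc : ∑ i, |w i| ≤ c)
    (hwa : ∑ i, w i * a i = 0) (ha : ∀ i, |a i| ≤ 1) :
    G ≤ lam * ∑ i, w i * (a i)^2 := by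
  apply hG.2
  refine ⟨w, fun i => a i • u, hw1, hwc, ?_, ?_, ?_⟩
  · have h1 : ∀ i ∈ Finset.univ, w i • (a i • u) = (w i * a i) • u := fun i _ => smul_smul _ _ _
    rw [Finset.sum_congr rfl h1, ← Finset.sum_smul, hwa, zero_smul]
  · intro i
    have h2 : (a i • u) ⬝ᵥ (a i • u) = a i * (a i * (u ⬝ᵥ u)) := by
      rw [smul_dotProduct, dotProduct_smul]; rfl
    rw [h2, hu]
    nlinarith [abs_mul_abs_self (a i), ha i, abs_nonneg (a i)]
  · rw [Finset.mul_sum]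
    apply Finset.sum_congr rfl
    intro i _
    show lam * (w i * a i ^ 2) = w i * ((a i • u) ⬝ᵥ S.mulVec (a i • u))
    have h3 : (a i • u) ⬝ᵥ S.mulVec (a i • u) = a i * (a i * (u ⬝ᵥ S.mulVec u)) := by
      rw [mulVec_smul, smul_dotProduct, dotProduct_smul]; rfl
    have h4 : u ⬝ᵥ (lam • u) = lam * (u ⬝ᵥ u) := by rw [dotProduct_smul]; rfl
    rw [h3, hev, h4, hu]
    ring

lemma normalize_aux {d : ℕ} {S : Matrix (Fin d) (Fin d) ℝ} {μ : ℝ}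
    (h : ∃ v : Fin d → ℝ, v ≠ 0 ∧ S.mulVec v = μ • v) :
    ∃ u : Fin d → ℝ, u ⬝ᵥ u = 1 ∧ S.mulVec u = μ • u := by
  obtain ⟨v, hv, hev⟩ := h
  have hpos : 0 < v ⬝ᵥ v := by
    rcases lt_or_eq_of_le (Finset.sum_nonneg fun i _ => mul_self_nonneg (v i) : (0:ℝ) ≤ v ⬝ᵥ v) with h'|h'
    · exact h'
    · exact absurd (dotProduct_self_eq_zero.mp h'.symm) hv
  refine ⟨(Real.sqrt (v ⬝ᵥ v))⁻¹ • v, ?_, ?_⟩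
  · rw [smul_dotProduct, dotProduct_smul]
    have h5 : (Real.sqrt (v ⬝ᵥ v))⁻¹ • ((Real.sqrt (v ⬝ᵥ v))⁻¹ • (v ⬝ᵥ v)) =
        ((Real.sqrt (v ⬝ᵥ v))⁻¹ * (Real.sqrt (v ⬝ᵥ v))⁻¹) * (v ⬝ᵥ v) := by
      rw [smul_smul]; rfl
    rw [h5, ← mul_inv, Real.mul_self_sqrt hpos.le]
    exact inv_mul_cancel₀ hpos.ne'
  · rw [mulVec_smul, hev, smul_comm]

theorem stmt_11 (d m : ℕ) (hm : m = 2 ∨ m = 3 ∨ m = 4) (c : ℝ) (hc : 1 < c)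
    (S : Matrix (Fin d) (Fin d) ℝ) (hS : S.IsSymm) (lmin lmax : ℝ)
    (hmin : IsLeast {μ : ℝ | ∃ v : Fin d → ℝ, v ≠ 0 ∧ S.mulVec v = μ • v} lmin)
    (hmax : IsGreatest {μ : ℝ | ∃ v : Fin d → ℝ, v ≠ 0 ∧ S.mulVec v = μ • v} lmax)
    (G : ℝ)
    (hG : IsLeast {t : ℝ | ∃ (w : Fin m → ℝ) (δ : Fin m → Fin d → ℝ),
      ∑ i, w i = 1 ∧ ∑ i, |w i| ≤ c ∧ ∑ i, w i • δ i = 0 ∧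
      (∀ i, δ i ⬝ᵥ δ i ≤ 1) ∧
      t = ∑ i, w i * (δ i ⬝ᵥ S.mulVec (δ i))} G) :
    G ≤ -(if m = 2 then (c - 1) / (c + 1) else (c - 1) / 2) * max |lmax| |lmin| ∧
      (S ≠ 0 → G < 0) := by
  have hc1 : (0:ℝ) < c + 1 := by linarith
  have hle : lmin ≤ lmax := hmin.2 hmax.1
  have hρ0 : (0:ℝ) ≤ max |lmax| |lmin| := le_trans (abs_nonneg lmax) (le_max_left _ _)
  have h1 : G ≤ -(if m = 2 then (c - 1) / (c + 1) else (c - 1) / 2) * max |lmax| |lmin| := by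
    by_cases hcase : |lmin| ≤ lmax
    · -- top eigenvalue dominates: lmax ≥ 0, ρ = lmax
      have hl0 : 0 ≤ lmax := le_trans (abs_nonneg lmin) hcase
      have hρeq : max |lmax| |lmin| = lmax := by
        rw [abs_of_nonneg hl0, max_eq_left hcase]
      obtain ⟨u, hu, hev⟩ := normalize_aux hmax.1
      rcases hm with rfl | rfl | rfl
      · have hb := key_aux hG u hu lmax hev ![(c+1)/2, (1-c)/2] ![(c-1)/(c+1), 1]
          (by simp [Fin.sum_univ_two]; ring)
          (by simp [Fin.sum_univ_two]
              rw [abs_of_nonneg (by linarith), abs_of_nonpos (by linarith)]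
              linarith)
          (by simp [Fin.sum_univ_two]; field_simp; ring)
          (by intro i
              fin_cases i
              · show |(c-1)/(c+1)| ≤ 1
                rw [abs_of_nonneg (div_nonneg (by linarith) (by linarith)),
                  div_le_one (by linarith)]
                linarith
              · show |(1:ℝ)| ≤ 1
                simp)
        refine le_trans hb (le_of_eq ?_)
        rw [hρeq]
        simp only [Fin.sum_univ_two, Matrix.cons_val_zero, Matrix.cons_val_one,
          Matrix.head_cons, if_pos rfl, ↓reduceIte]
        field_simp
        ring
      · have hb := key_aux hG u hu lmax hev ![(c+1)/2, (1-c)/4, (1-c)/4] ![0, 1, -1]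
          (by simp [Fin.sum_univ_three]; ring)
          (by simp [Fin.sum_univ_three]
              rw [abs_of_nonneg (by linarith), abs_of_nonpos (by linarith)]
              linarith)
          (by simp [Fin.sum_univ_three])
          (by intro i; fin_cases i <;> simp)
        refine le_trans hb (le_of_eq ?_)
        rw [hρeq]
        simp only [Fin.sum_univ_three, Matrix.cons_val_zero, Matrix.cons_val_one,
          Matrix.head_cons, Matrix.cons_val_two, Matrix.tail_cons]
        norm_num
        ring
      · have hb := key_aux hG u hu lmax hev ![(c+1)/2, (1-c)/4, (1-c)/4, 0] ![0, 1, -1, 0]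
          (by simp [Fin.sum_univ_four]; ring)
          (by simp [Fin.sum_univ_four]
              rw [abs_of_nonneg (by linarith), abs_of_nonpos (by linarith)]
              linarith)
          (by simp [Fin.sum_univ_four])
          (by intro i; fin_cases i <;> simp)
        refine le_trans hb (le_of_eq ?_)
        rw [hρeq]
        simp only [Fin.sum_univ_four, Matrix.cons_val_zero, Matrix.cons_val_one,
          Matrix.head_cons, Matrix.cons_val_two, Matrix.tail_cons, Matrix.cons_val_three]
        norm_num
        ring
    · -- bottom eigenvalue dominates: lmin ≤ 0, ρ = -lmin
      push_neg at hcase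
      have hlmin0 : lmin ≤ 0 := by
        by_contra h
        push_neg at h
        rw [abs_of_pos h] at hcase
        linarith
      have habs : |lmax| ≤ -lmin := by
        rcases le_or_gt 0 lmax with h | h
        · rw [abs_of_nonneg h]
          rw [abs_of_nonpos hlmin0] at hcase
          linarith
        · rw [abs_of_neg h]; linarith
      have hρeq : max |lmax| |lmin| = -lmin := by
        rw [abs_of_nonpos hlmin0]
        exact max_eq_right habs
      obtain ⟨u, hu, hev⟩ := normalize_aux hmin.1
      rcases hm with rfl | rfl | rfl
      · have hb := key_aux hG u hu lmin hev ![1/2, 1/2] ![1, -1]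
          (by simp [Fin.sum_univ_two]; ring)
          (by simp only [Fin.sum_univ_two, Matrix.cons_val_zero, Matrix.cons_val_one, Matrix.head_cons,
                abs_of_nonneg (by norm_num : (0:ℝ) ≤ 1/2)]
              linarith)
          (by simp [Fin.sum_univ_two])
          (by intro i; fin_cases i <;> simp)
        refine le_trans hb ?_
        rw [hρeq]
        simp only [Fin.sum_univ_two, Matrix.cons_val_zero, Matrix.cons_val_one,
          Matrix.head_cons, if_pos rfl, if_true]
        have hfrac : (c-1)/(c+1) ≤ 1 := by rw [div_le_one hc1]; linarith
        nlinarith [mul_nonneg (sub_nonneg.2 hfrac) (neg_nonneg.2 hlmin0)]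
      · have hb := key_aux hG u hu lmin hev ![(1-c)/2, (c+1)/4, (c+1)/4] ![0, 1, -1]
          (by simp [Fin.sum_univ_three]; ring)
          (by simp [Fin.sum_univ_three]
              rw [abs_of_nonpos (by linarith), abs_of_nonneg (by linarith)]
              linarith)
          (by simp [Fin.sum_univ_three])
          (by intro i; fin_cases i <;> simp)
        refine le_trans hb ?_
        rw [hρeq]
        simp only [Fin.sum_univ_three, Matrix.cons_val_zero, Matrix.cons_val_one,
          Matrix.head_cons, Matrix.cons_val_two, Matrix.tail_cons]
        norm_num
        nlinarith
      · have hb := key_aux hG u hu lmin hev ![(1-c)/2, (c+1)/4, (c+1)/4, 0] ![0, 1, -1, 0]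
          (by simp [Fin.sum_univ_four]; ring)
          (by simp [Fin.sum_univ_four]
              rw [abs_of_nonpos (by linarith), abs_of_nonneg (by linarith)]
              linarith)
          (by simp [Fin.sum_univ_four])
          (by intro i; fin_cases i <;> simp)
        refine le_trans hb ?_
        rw [hρeq]
        simp only [Fin.sum_univ_four, Matrix.cons_val_zero, Matrix.cons_val_one,
          Matrix.head_cons, Matrix.cons_val_two, Matrix.tail_cons, Matrix.cons_val_three]
        norm_num
        nlinarith
  refine ⟨h1, fun hne => ?_⟩
  have hH : S.IsHermitian := by rwa [Matrix.IsHermitian, conjTranspose_eq_transpose_of_trivial]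
  obtain ⟨v, t, ht, hv, hevt⟩ := hH.exists_eigenvector_of_ne_zero hne
  have htmem : t ∈ {μ : ℝ | ∃ v : Fin d → ℝ, v ≠ 0 ∧ S.mulVec v = μ • v} := ⟨v, hv, hevt⟩
  have h2 : |t| ≤ max |lmax| |lmin| :=
    abs_le.2 ⟨by linarith [neg_abs_le lmin, le_max_right |lmax| |lmin|, hmin.2 htmem],
      by linarith [le_abs_self lmax, le_max_left |lmax| |lmin|, hmax.2 htmem]⟩
  have hρpos : 0 < max |lmax| |lmin| := lt_of_lt_of_le (abs_pos.2 ht) h2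
  have hκpos : 0 < (if m = 2 then (c - 1) / (c + 1) else (c - 1) / 2) := by
    split
    · exact div_pos (by linarith) hc1
    · exact div_pos (by linarith) (by norm_num)
  nlinarith [mul_pos hκpos hρpos]
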